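/- Let a : ℝ → ℝ be continuous on [0,1] with 0 < a₀ ≤ a(x) ≤ a₁ for all x ∈ [0,1]. Then there exists a constant C > 0 depending only on a₀ and a₁ such that for all continuous f, g : ℝ → ℝ on [0,1] and all h₀, h₁ ∈ ℝ there exists a unique pair (ū, p̄) of continuously differentiable functions on [0,1] satisfying p̄′(x) + a(x)·ū(x) = f(x) and ū′(x) = g(x) for all x ∈ [0,1] and p̄(0) = h₀, p̄(1) = h₁; moreover this solution satisfies (‖ū‖² + ‖ū′‖²)^{1/2} + (‖p̄‖² + ‖p̄′‖²)^{1/2} ≤ C·(‖f‖ + ‖g‖ + |h₀| + |h₁|), where ‖f‖ = (∫₀¹ f(x)² dx)^{1/2}. -/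

import Mathlib

open MeasureTheory Set

/-- The squared L²(0,1) norm `‖f‖² = ∫₀¹ f² dx`. -/
noncomputable def L2nsq (f : ℝ → ℝ) : ℝ := ∫ x in (0:ℝ)..1, (f x) ^ 2

/-- The L²(0,1) norm. -/
noncomputable def L2nrm (f : ℝ → ℝ) : ℝ := Real.sqrt (L2nsq f)

/-- `(ū, p̄)` solves the stationary damped wave system
`p̄′ + a ū = f`, `ū′ = g` on `[0,1]` with `p̄(0)=h₀`, `p̄(1)=h₁`.
(Differentiability of `ū, p̄` on `[0,1]` is encoded via `HasDerivAt` with the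
derivatives given by the equations; continuity of the derivatives follows from
the continuity of `a, f, g, ū`.) -/
def IsStationarySolution (a f g : ℝ → ℝ) (h₀ h₁ : ℝ) (ub pb : ℝ → ℝ) : Prop :=
  (∀ x ∈ Icc (0:ℝ) 1,
      HasDerivAt ub (g x) x ∧ HasDerivAt pb (f x - a x * ub x) x) ∧
  pb 0 = h₀ ∧ pb 1 = h₁

lemma sq_le_of_abs_le' {u v w : ℝ} (h : |u| ≤ v + w) : u ^ 2 ≤ 2 * v ^ 2 + 2 * w ^ 2 := by
  nlinarith [abs_nonneg u, sq_abs u, sq_nonneg (v - w)]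

lemma ftc01 {F : ℝ → ℝ} (hF : Continuous F) (x : ℝ) :
    HasDerivAt (fun y => ∫ t in (0:ℝ)..y, F t) (F x) x :=
  intervalIntegral.integral_hasDerivAt_right (hF.intervalIntegrable _ _)
    (hF.stronglyMeasurableAtFilter _ _) hF.continuousAt

lemma sqrt_add_le2 {x y : ℝ} (hx : 0 ≤ x) (hy : 0 ≤ y) :
    Real.sqrt (x + y) ≤ Real.sqrt x + Real.sqrt y := by
  have h : x + y ≤ (Real.sqrt x + Real.sqrt y) ^ 2 := by
    have := Real.sq_sqrt hx; have := Real.sq_sqrt hy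
    nlinarith [Real.sqrt_nonneg x, Real.sqrt_nonneg y]
  calc Real.sqrt (x + y) ≤ Real.sqrt ((Real.sqrt x + Real.sqrt y) ^ 2) := Real.sqrt_le_sqrt h
    _ = Real.sqrt x + Real.sqrt y := by rw [Real.sqrt_sq (by positivity)]

lemma sqrt_add_le3 {a b c : ℝ} (ha : 0 ≤ a) (hb : 0 ≤ b) (hc : 0 ≤ c) :
    Real.sqrt (a + b + c) ≤ Real.sqrt a + Real.sqrt b + Real.sqrt c := by
  calc Real.sqrt (a + b + c) ≤ Real.sqrt (a + b) + Real.sqrt c :=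
        sqrt_add_le2 (by linarith) hc
    _ ≤ Real.sqrt a + Real.sqrt b + Real.sqrt c := by
        have := sqrt_add_le2 ha hb; linarith

lemma cauchy01 {F : ℝ → ℝ} (hF : Continuous F) :
    ∫ x in (0:ℝ)..1, |F x| ≤ Real.sqrt (∫ x in (0:ℝ)..1, F x ^ 2) := by
  set I : ℝ := ∫ x in (0:ℝ)..1, |F x| with hI
  have hint2 : IntervalIntegrable (fun x => F x ^ 2) volume 0 1 :=
    (hF.pow 2).intervalIntegrable _ _
  have hkey : (0:ℝ) ≤ ∫ x in (0:ℝ)..1, (|F x| - I) ^ 2 :=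
    intervalIntegral.integral_nonneg (by norm_num) (fun x _ => sq_nonneg _)
  have hexp : ∫ x in (0:ℝ)..1, (|F x| - I) ^ 2
      = (∫ x in (0:ℝ)..1, F x ^ 2) - I ^ 2 := by
    have h1 : ∀ x : ℝ, (|F x| - I) ^ 2 = F x ^ 2 - (2 * I * |F x| - I ^ 2) := by
      intro x; rw [← sq_abs (F x)]; ring
    rw [intervalIntegral.integral_congr (fun x _ => h1 x)]
    have hi3 : IntervalIntegrable (fun x => 2 * I * |F x| - I ^ 2) volume 0 1 :=
      ((continuous_const.mul hF.abs).sub continuous_const).intervalIntegrable _ _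
    rw [intervalIntegral.integral_sub hint2 hi3,
      intervalIntegral.integral_sub (f := fun x => 2 * I * |F x|) (g := fun _ => I ^ 2)
        ((continuous_const.mul hF.abs).intervalIntegrable _ _)
        intervalIntegrable_const,
      intervalIntegral.integral_const_mul, intervalIntegral.integral_const]
    simp [← hI]; ring
  have hI2 : I ^ 2 ≤ ∫ x in (0:ℝ)..1, F x ^ 2 := by linarith [hkey, hexp.le]
  calc I ≤ |I| := le_abs_self _
    _ = Real.sqrt (I ^ 2) := (Real.sqrt_sq_eq_abs I).symm
    _ ≤ Real.sqrt (∫ x in (0:ℝ)..1, F x ^ 2) := Real.sqrt_le_sqrt hI2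

lemma l2_le_sup {u : ℝ → ℝ} (hu : Continuous u) {M : ℝ}
    (hM : ∀ x ∈ Icc (0:ℝ) 1, |u x| ≤ M) :
    Real.sqrt (∫ x in (0:ℝ)..1, u x ^ 2) ≤ M := by
  have hM0 : 0 ≤ M := le_trans (abs_nonneg _) (hM 0 (by norm_num))
  have h1 : ∫ x in (0:ℝ)..1, u x ^ 2 ≤ ∫ x in (0:ℝ)..1, M ^ 2 := by
    apply intervalIntegral.integral_mono_on (by norm_num)
      ((hu.pow 2).intervalIntegrable _ _) intervalIntegrable_const
    intro x hx
    have := hM x hx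
    rw [Pi.pow_apply]; nlinarith [abs_nonneg (u x), sq_abs (u x)]
  have h2 : ∫ x in (0:ℝ)..1, (M:ℝ) ^ 2 = M ^ 2 := by simp
  calc Real.sqrt (∫ x in (0:ℝ)..1, u x ^ 2) ≤ Real.sqrt (M ^ 2) :=
        Real.sqrt_le_sqrt (by rw [← h2]; exact h1)
    _ = M := by rw [Real.sqrt_sq hM0]

set_option maxHeartbeats 1000000

/-- Well-posedness of the stationary damped wave system: unique continuously
differentiable solution with an a-priori `H¹`-bound whose constant depends
only on `a₀, a₁`. -/
theorem stmt7 (a₀ a₁ : ℝ) (ha₀ : 0 < a₀) (ha₀₁ : a₀ ≤ a₁) :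
    ∃ C > (0:ℝ),
      ∀ a : ℝ → ℝ, ContinuousOn a (Icc (0:ℝ) 1) →
        (∀ x ∈ Icc (0:ℝ) 1, a₀ ≤ a x ∧ a x ≤ a₁) →
      ∀ f g : ℝ → ℝ, ContinuousOn f (Icc (0:ℝ) 1) → ContinuousOn g (Icc (0:ℝ) 1) →
      ∀ h₀ h₁ : ℝ,
      ∃ ub pb : ℝ → ℝ,
        IsStationarySolution a f g h₀ h₁ ub pb ∧
        (∀ ub' pb' : ℝ → ℝ, IsStationarySolution a f g h₀ h₁ ub' pb' →
            EqOn ub' ub (Icc (0:ℝ) 1) ∧ EqOn pb' pb (Icc (0:ℝ) 1)) ∧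
        Real.sqrt (L2nsq ub + L2nsq (deriv ub))
            + Real.sqrt (L2nsq pb + L2nsq (deriv pb))
          ≤ C * (L2nrm f + L2nrm g + |h₀| + |h₁|) := by
  have ha₁ : 0 < a₁ := lt_of_lt_of_le ha₀ ha₀₁
  set K : ℝ := (1 + a₁) / a₀ + 1 with hK
  have hKpos : 0 < K := by positivity
  refine ⟨K + 5 + 3 * a₁ * K, by positivity, ?_⟩
  intro a ha hab f g hf hg h₀ h₁
  -- continuous extensions to all of ℝ
  set π : ℝ → ℝ := fun x => max 0 (min 1 x) with hπdef
  have hπc : Continuous π := continuous_const.max (continuous_const.min continuous_id)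
  have hπm : ∀ x, π x ∈ Icc (0:ℝ) 1 :=
    fun x => ⟨le_max_left _ _, max_le zero_le_one (min_le_left _ _)⟩
  have hπid : ∀ x ∈ Icc (0:ℝ) 1, π x = x := by
    intro x hx
    simp only [hπdef]
    rw [min_eq_right hx.2, max_eq_right hx.1]
  set aE : ℝ → ℝ := fun x => a (π x) with haEdef
  set fE : ℝ → ℝ := fun x => f (π x) with hfEdef
  set gE : ℝ → ℝ := fun x => g (π x) with hgEdef
  have haE : Continuous aE := ha.comp_continuous hπc hπm
  have hfE : Continuous fE := hf.comp_continuous hπc hπm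
  have hgE : Continuous gE := hg.comp_continuous hπc hπm
  have haEeq : ∀ x ∈ Icc (0:ℝ) 1, aE x = a x := fun x hx => by rw [haEdef]; simp [hπid x hx]
  have hfEeq : ∀ x ∈ Icc (0:ℝ) 1, fE x = f x := fun x hx => by rw [hfEdef]; simp [hπid x hx]
  have hgEeq : ∀ x ∈ Icc (0:ℝ) 1, gE x = g x := fun x hx => by rw [hgEdef]; simp [hπid x hx]
  have haEb : ∀ x, a₀ ≤ aE x ∧ aE x ≤ a₁ := fun x => hab _ (hπm x)
  -- the mean of aE
  set A : ℝ := ∫ t in (0:ℝ)..1, aE t with hA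
  have hA0 : a₀ ≤ A := by
    have h := intervalIntegral.integral_mono_on (μ := volume) (f := fun _ => a₀) (g := aE)
      (a := 0) (b := 1) (by norm_num)
      intervalIntegrable_const (haE.intervalIntegrable _ _)
      (fun x _ => (haEb x).1)
    simpa using h
  have hApos : 0 < A := lt_of_lt_of_le ha₀ hA0
  -- construction of the solution
  set Gf : ℝ → ℝ := fun x => ∫ t in (0:ℝ)..x, gE t with hGfdef
  have hGfd : ∀ x, HasDerivAt Gf (gE x) x := fun x => ftc01 hgE x
  have hGfc : Continuous Gf :=
    Differentiable.continuous (fun x => (hGfd x).differentiableAt)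
  set c : ℝ := ((∫ t in (0:ℝ)..1, fE t) - (∫ t in (0:ℝ)..1, aE t * Gf t) - h₁ + h₀) / A with hc
  set ub : ℝ → ℝ := fun x => c + Gf x with hubdef
  have hubc : Continuous ub := continuous_const.add hGfc
  have hubd : ∀ x, HasDerivAt ub (gE x) x := fun x => (hGfd x).const_add c
  set Φ : ℝ → ℝ := fun x => fE x - aE x * ub x with hΦdef
  have hΦc : Continuous Φ := hfE.sub (haE.mul hubc)
  set pb : ℝ → ℝ := fun x => h₀ + ∫ t in (0:ℝ)..x, Φ t with hpbdef
  have hpbd : ∀ x, HasDerivAt pb (Φ x) x := fun x => (ftc01 hΦc x).const_add h₀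
  have hdub : deriv ub = gE := funext fun x => (hubd x).deriv
  have hdpb : deriv pb = Φ := funext fun x => (hpbd x).deriv
  -- boundary values
  have hpb0 : pb 0 = h₀ := by simp [hpbdef]
  have hcA : c * A = (∫ t in (0:ℝ)..1, fE t) - (∫ t in (0:ℝ)..1, aE t * Gf t) - h₁ + h₀ := by
    rw [hc]; field_simp
  have hsplit : ∫ t in (0:ℝ)..1, Φ t
      = (∫ t in (0:ℝ)..1, fE t) - (c * A + ∫ t in (0:ℝ)..1, aE t * Gf t) := by
    have h1 : ∀ t, Φ t = fE t - (aE t * c + aE t * Gf t) := by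
      intro t; simp only [hΦdef, hubdef]; ring
    rw [intervalIntegral.integral_congr (fun t _ => h1 t)]
    rw [intervalIntegral.integral_sub (g := fun t => aE t * c + aE t * Gf t) (hfE.intervalIntegrable _ _)
      (((haE.mul continuous_const).add (haE.mul hGfc)).intervalIntegrable _ _),
      intervalIntegral.integral_add (f := fun t => aE t * c) (g := fun t => aE t * Gf t) ((haE.mul continuous_const).intervalIntegrable _ _)
        ((haE.mul hGfc).intervalIntegrable _ _),
      intervalIntegral.integral_mul_const]
    rw [hA]; ring
  have hpb1 : pb 1 = h₁ := by
    simp only [hpbdef, hsplit, hcA]; ring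
  have hsol : IsStationarySolution a f g h₀ h₁ ub pb := by
    refine ⟨fun x hx => ⟨?_, ?_⟩, hpb0, hpb1⟩
    · rw [← hgEeq x hx]; exact hubd x
    · have h := hpbd x
      have : Φ x = f x - a x * ub x := by
        simp only [hΦdef]; rw [hfEeq x hx, haEeq x hx]
      rwa [this] at h
  refine ⟨ub, pb, hsol, ?_, ?_⟩
  · -- uniqueness
    rintro ub' pb' ⟨hder, hp0, hp1⟩
    have hv : ∀ x ∈ Icc (0:ℝ) 1, ub' x - ub x = ub' 0 - ub 0 := by
      intro x hx
      have h0x : ∀ t ∈ uIcc (0:ℝ) x, HasDerivAt (fun y => ub' y - ub y) ((fun _ => (0:ℝ)) t) t := by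
        intro t ht
        rw [uIcc_of_le hx.1] at ht
        have htI : t ∈ Icc (0:ℝ) 1 := ⟨ht.1, le_trans ht.2 hx.2⟩
        have h1 := (hder t htI).1
        have h2 : HasDerivAt ub (g t) t := by rw [← hgEeq t htI]; exact hubd t
        have h3 := h1.sub h2; rw [sub_self] at h3; exact h3
      have h := intervalIntegral.integral_eq_sub_of_hasDerivAt h0x
        (intervalIntegrable_const)
      simp only [intervalIntegral.integral_const, smul_zero] at h
      linarith [h.symm]
    set κ : ℝ := ub' 0 - ub 0 with hκdef
    have hq : ∀ x ∈ Icc (0:ℝ) 1, pb' x - pb x = ∫ t in (0:ℝ)..x, (-(aE t) * κ) := by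
      intro x hx
      have hds : ∀ t ∈ uIcc (0:ℝ) x,
          HasDerivAt (fun y => pb' y - pb y) ((fun s => -(aE s) * κ) t) t := by
        intro t ht
        rw [uIcc_of_le hx.1] at ht
        have htI : t ∈ Icc (0:ℝ) 1 := ⟨ht.1, le_trans ht.2 hx.2⟩
        have h1 := (hder t htI).2
        have h2 : HasDerivAt pb (f t - a t * ub t) t := (hsol.1 t htI).2
        have h3 := h1.sub h2
        have heq : (f t - a t * ub' t) - (f t - a t * ub t) = -(aE t) * κ := by
          have hvt := hv t htI
          rw [haEeq t htI]
          linear_combination (-(a t)) * hvt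
        rwa [heq] at h3
      have h := intervalIntegral.integral_eq_sub_of_hasDerivAt hds
        ((haE.neg.mul continuous_const).intervalIntegrable _ _)
      have hzero : pb' 0 - pb 0 = 0 := by rw [hp0, hpb0]; ring
      rw [h, hzero]; ring
    have hκ0 : κ = 0 := by
      have h1 := hq 1 ⟨zero_le_one, le_refl 1⟩
      have h2 : pb' 1 - pb 1 = 0 := by rw [hp1, hpb1]; ring
      have h3 : ∫ t in (0:ℝ)..1, (-(aE t) * κ) = -(A * κ) := by
        have : ∀ t, -(aE t) * κ = -(aE t * κ) := fun t => by ring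
        rw [intervalIntegral.integral_congr (fun t _ => this t),
          intervalIntegral.integral_neg, intervalIntegral.integral_mul_const, hA]
      rw [h2, h3] at h1
      have : A * κ = 0 := by linarith
      exact (mul_eq_zero.mp this).resolve_left (ne_of_gt hApos)
    constructor
    · intro x hx
      have hvx := hv x hx
      rw [hκ0] at hvx
      linarith
    · intro x hx
      have h1 := hq x hx
      rw [hκ0] at h1
      simp only [mul_zero, intervalIntegral.integral_zero] at h1
      linarith
  · -- the a priori bound
    have habs_sub : ∀ x y : ℝ, |x - y| ≤ |x| + |y| := fun x y => by
      rw [sub_eq_add_neg]; exact (abs_add_le x (-y)).trans (by rw [abs_neg])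
    set If : ℝ := ∫ t in (0:ℝ)..1, |fE t| with hIf
    set Ig : ℝ := ∫ t in (0:ℝ)..1, |gE t| with hIg
    have hIf0 : 0 ≤ If :=
      intervalIntegral.integral_nonneg (by norm_num) (fun t _ => abs_nonneg _)
    have hIg0 : 0 ≤ Ig :=
      intervalIntegral.integral_nonneg (by norm_num) (fun t _ => abs_nonneg _)
    have hfE2 : (∫ x in (0:ℝ)..1, fE x ^ 2) = L2nsq f := by
      rw [L2nsq]
      exact intervalIntegral.integral_congr (fun x hx => by
        rw [uIcc_of_le zero_le_one] at hx; rw [hfEeq x hx])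
    have hgE2 : (∫ x in (0:ℝ)..1, gE x ^ 2) = L2nsq g := by
      rw [L2nsq]
      exact intervalIntegral.integral_congr (fun x hx => by
        rw [uIcc_of_le zero_le_one] at hx; rw [hgEeq x hx])
    have hL2f0 : 0 ≤ L2nsq f := by
      rw [← hfE2]
      exact intervalIntegral.integral_nonneg (by norm_num) (fun x _ => sq_nonneg _)
    have hL2g0 : 0 ≤ L2nsq g := by
      rw [← hgE2]
      exact intervalIntegral.integral_nonneg (by norm_num) (fun x _ => sq_nonneg _)
    have hIfF : If ≤ L2nrm f := by rw [L2nrm, ← hfE2]; exact cauchy01 hfE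
    have hIgG : Ig ≤ L2nrm g := by rw [L2nrm, ← hgE2]; exact cauchy01 hgE
    have hLf0 : 0 ≤ L2nrm f := Real.sqrt_nonneg _
    have hLg0 : 0 ≤ L2nrm g := Real.sqrt_nonneg _
    have hGfb : ∀ x ∈ Icc (0:ℝ) 1, |Gf x| ≤ Ig := by
      intro x hx
      calc |Gf x| ≤ ∫ t in (0:ℝ)..x, |gE t| :=
            intervalIntegral.abs_integral_le_integral_abs hx.1
        _ ≤ Ig := intervalIntegral.integral_mono_interval le_rfl hx.1 hx.2
              (ae_of_all _ fun t => abs_nonneg _) (hgE.abs.intervalIntegrable _ _)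
    set N : ℝ := If + a₁ * Ig + |h₀| + |h₁| with hN
    have hN0 : 0 ≤ N := by
      have := mul_nonneg ha₁.le hIg0
      have := abs_nonneg h₀; have := abs_nonneg h₁
      rw [hN]; linarith
    have hnum : |(∫ t in (0:ℝ)..1, fE t) - (∫ t in (0:ℝ)..1, aE t * Gf t) - h₁ + h₀| ≤ N := by
      have h1 : |∫ t in (0:ℝ)..1, fE t| ≤ If :=
        intervalIntegral.abs_integral_le_integral_abs zero_le_one
      have h2 : |∫ t in (0:ℝ)..1, aE t * Gf t| ≤ a₁ * Ig := by
        calc |∫ t in (0:ℝ)..1, aE t * Gf t| ≤ ∫ t in (0:ℝ)..1, |aE t * Gf t| :=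
              intervalIntegral.abs_integral_le_integral_abs zero_le_one
          _ ≤ ∫ t in (0:ℝ)..1, a₁ * Ig := by
              apply intervalIntegral.integral_mono_on (by norm_num)
                ((haE.mul hGfc).abs.intervalIntegrable _ _) intervalIntegrable_const
              intro t ht
              rw [Pi.mul_apply, abs_mul]
              have h3 : |aE t| ≤ a₁ := by
                rw [abs_of_pos (lt_of_lt_of_le ha₀ (haEb t).1)]; exact (haEb t).2
              exact mul_le_mul h3 (hGfb t ht) (abs_nonneg _) ha₁.le
          _ = a₁ * Ig := by simp
      have e1 : |(∫ t in (0:ℝ)..1, fE t) - (∫ t in (0:ℝ)..1, aE t * Gf t) - h₁ + h₀|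
          ≤ |(∫ t in (0:ℝ)..1, fE t) - (∫ t in (0:ℝ)..1, aE t * Gf t) - h₁| + |h₀| := abs_add_le _ _
      have e2 : |(∫ t in (0:ℝ)..1, fE t) - (∫ t in (0:ℝ)..1, aE t * Gf t) - h₁|
          ≤ |(∫ t in (0:ℝ)..1, fE t) - (∫ t in (0:ℝ)..1, aE t * Gf t)| + |h₁| := habs_sub _ _
      have e3 : |(∫ t in (0:ℝ)..1, fE t) - (∫ t in (0:ℝ)..1, aE t * Gf t)|
          ≤ |∫ t in (0:ℝ)..1, fE t| + |∫ t in (0:ℝ)..1, aE t * Gf t| := habs_sub _ _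
      rw [hN]; linarith
    have hcb : |c| ≤ N / a₀ := by
      rw [hc, abs_div, abs_of_pos hApos]
      exact div_le_div₀ hN0 hnum ha₀ hA0
    set Mu : ℝ := N / a₀ + Ig with hMu
    have hMu0 : 0 ≤ Mu := add_nonneg (div_nonneg hN0 ha₀.le) hIg0
    have hubb : ∀ x ∈ Icc (0:ℝ) 1, |ub x| ≤ Mu := by
      intro x hx
      calc |ub x| ≤ |c| + |Gf x| := abs_add_le _ _
        _ ≤ N / a₀ + Ig := add_le_add hcb (hGfb x hx)
    set S : ℝ := L2nrm f + L2nrm g + |h₀| + |h₁| with hS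
    have hS0 : 0 ≤ S := by
      have := abs_nonneg h₀; have := abs_nonneg h₁
      rw [hS]; linarith
    have hIfS : If ≤ S := by
      have := abs_nonneg h₀; have := abs_nonneg h₁
      rw [hS]; linarith
    have hLfS : L2nrm f ≤ S := by
      have := abs_nonneg h₀; have := abs_nonneg h₁
      rw [hS]; linarith
    have hLgS : L2nrm g ≤ S := by
      have := abs_nonneg h₀; have := abs_nonneg h₁
      rw [hS]; linarith
    have hh0S : |h₀| ≤ S := by
      have := abs_nonneg h₁
      rw [hS]; linarith
    have hMuS : Mu ≤ K * S := by
      have hNS : N ≤ (1 + a₁) * S := by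
        have h1 : a₁ * Ig ≤ a₁ * S := by
          apply mul_le_mul_of_nonneg_left _ ha₁.le
          linarith
        have h2 : If + |h₀| + |h₁| ≤ S := by rw [hS]; linarith
        calc If + a₁ * Ig + |h₀| + |h₁| ≤ S + a₁ * S := by linarith
          _ = (1 + a₁) * S := by ring
      have hdiv : N / a₀ ≤ ((1 + a₁) * S) / a₀ := (div_le_div_iff_of_pos_right ha₀).mpr hNS
      have heq : ((1 + a₁) * S) / a₀ = (1 + a₁) / a₀ * S := by ring
      have hIgS : Ig ≤ S := by linarith
      rw [hMu, hK]
      calc N / a₀ + Ig ≤ (1 + a₁) / a₀ * S + S := by rw [← heq]; linarith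
        _ = ((1 + a₁) / a₀ + 1) * S := by ring
    -- bound for the (ub, ub') part
    have h0ub : 0 ≤ L2nsq ub := by
      rw [L2nsq]
      exact intervalIntegral.integral_nonneg (by norm_num) (fun x _ => sq_nonneg _)
    have hq2 : L2nsq (deriv ub) = L2nsq g := by
      rw [hdub, ← hgE2, L2nsq]
    have hq1 : Real.sqrt (L2nsq ub) ≤ Mu := by
      rw [L2nsq]; exact l2_le_sup hubc hubb
    have hsub1 : Real.sqrt (L2nsq ub + L2nsq (deriv ub)) ≤ Mu + L2nrm g := by
      calc Real.sqrt (L2nsq ub + L2nsq (deriv ub))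
          ≤ Real.sqrt (L2nsq ub) + Real.sqrt (L2nsq (deriv ub)) :=
            sqrt_add_le2 h0ub (by rw [hq2]; exact hL2g0)
        _ ≤ Mu + L2nrm g := add_le_add hq1 (le_of_eq (by rw [hq2, L2nrm]))
    -- bound for the (pb, pb') part
    have hpbc : Continuous pb :=
      Differentiable.continuous (fun x => (hpbd x).differentiableAt)
    set Mp : ℝ := |h₀| + If + a₁ * Mu with hMp
    have hMp0 : 0 ≤ Mp := by
      have := abs_nonneg h₀; have := mul_nonneg ha₁.le hMu0
      rw [hMp]; linarith
    have hΦb : ∀ t ∈ Icc (0:ℝ) 1, |Φ t| ≤ |fE t| + a₁ * Mu := by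
      intro t ht
      have h3 : |aE t| ≤ a₁ := by
        rw [abs_of_pos (lt_of_lt_of_le ha₀ (haEb t).1)]; exact (haEb t).2
      calc |Φ t| ≤ |fE t| + |aE t * ub t| := habs_sub _ _
        _ ≤ |fE t| + a₁ * Mu := by
            rw [abs_mul]
            exact add_le_add le_rfl (mul_le_mul h3 (hubb t ht) (abs_nonneg _) ha₁.le)
    have hpbb : ∀ x ∈ Icc (0:ℝ) 1, |pb x| ≤ Mp := by
      intro x hx
      have h1 : |∫ t in (0:ℝ)..x, Φ t| ≤ ∫ t in (0:ℝ)..x, |Φ t| :=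
        intervalIntegral.abs_integral_le_integral_abs hx.1
      have h2 : (∫ t in (0:ℝ)..x, |Φ t|) ≤ ∫ t in (0:ℝ)..1, |Φ t| :=
        intervalIntegral.integral_mono_interval le_rfl hx.1 hx.2
          (ae_of_all _ fun t => abs_nonneg _) (hΦc.abs.intervalIntegrable _ _)
      have h3 : (∫ t in (0:ℝ)..1, |Φ t|) ≤ ∫ t in (0:ℝ)..1, (|fE t| + a₁ * Mu) :=
        intervalIntegral.integral_mono_on (by norm_num)
          (hΦc.abs.intervalIntegrable _ _)
          ((hfE.abs.add continuous_const).intervalIntegrable _ _) hΦb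
      have h4 : (∫ t in (0:ℝ)..1, (|fE t| + a₁ * Mu)) = If + a₁ * Mu := by
        rw [intervalIntegral.integral_add (hfE.abs.intervalIntegrable _ _)
          intervalIntegrable_const, intervalIntegral.integral_const]
        simp [hIf]
      have h5 : |pb x| ≤ |h₀| + |∫ t in (0:ℝ)..x, Φ t| := abs_add_le _ _
      rw [hMp]; linarith
    have hΦ2 : L2nsq (deriv pb) ≤ 4 * L2nsq f + 4 * a₁ ^ 2 * Mu ^ 2 := by
      rw [hdpb, L2nsq]
      have hpt : ∀ t ∈ Icc (0:ℝ) 1, Φ t ^ 2 ≤ 2 * fE t ^ 2 + 2 * (a₁ * Mu) ^ 2 := by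
        intro t ht
        have h1 := sq_le_of_abs_le' (hΦb t ht)
        rwa [sq_abs] at h1
      have h6 : (∫ t in (0:ℝ)..1, Φ t ^ 2)
          ≤ ∫ t in (0:ℝ)..1, (2 * fE t ^ 2 + 2 * (a₁ * Mu) ^ 2) :=
        intervalIntegral.integral_mono_on (by norm_num)
          ((hΦc.pow 2).intervalIntegrable _ _)
          (((continuous_const.mul (hfE.pow 2)).add continuous_const).intervalIntegrable _ _) hpt
      have h7 : (∫ t in (0:ℝ)..1, (2 * fE t ^ 2 + 2 * (a₁ * Mu) ^ 2))
          = 2 * L2nsq f + 2 * (a₁ * Mu) ^ 2 := by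
        rw [intervalIntegral.integral_add (f := fun t => 2 * fE t ^ 2)
          ((continuous_const.mul (hfE.pow 2)).intervalIntegrable _ _) intervalIntegrable_const,
          intervalIntegral.integral_const_mul, hfE2, intervalIntegral.integral_const]
        simp
      have he : (a₁ * Mu) ^ 2 = a₁ ^ 2 * Mu ^ 2 := by ring
      have hX0 : 0 ≤ a₁ ^ 2 * Mu ^ 2 := by positivity
      linarith [h6, h7]
    have h0pb : 0 ≤ L2nsq pb := by
      rw [L2nsq]
      exact intervalIntegral.integral_nonneg (by norm_num) (fun x _ => sq_nonneg _)
    have hpbl2 : L2nsq pb ≤ Mp ^ 2 := by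
      have h1 : Real.sqrt (L2nsq pb) ≤ Mp := by
        rw [L2nsq]; exact l2_le_sup hpbc hpbb
      calc L2nsq pb = Real.sqrt (L2nsq pb) ^ 2 := (Real.sq_sqrt h0pb).symm
        _ ≤ Mp ^ 2 := pow_le_pow_left₀ (Real.sqrt_nonneg _) h1 2
    have hsub2 : Real.sqrt (L2nsq pb + L2nsq (deriv pb))
        ≤ Mp + 2 * L2nrm f + 2 * (a₁ * Mu) := by
      have hs4 : Real.sqrt (4 * L2nsq f) = 2 * L2nrm f := by
        rw [show (4:ℝ) * L2nsq f = (2 * L2nrm f) ^ 2 by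
          rw [L2nrm]; rw [mul_pow, Real.sq_sqrt hL2f0]; ring]
        exact Real.sqrt_sq (by positivity)
      have hs5 : Real.sqrt (4 * a₁ ^ 2 * Mu ^ 2) = 2 * (a₁ * Mu) := by
        rw [show (4:ℝ) * a₁ ^ 2 * Mu ^ 2 = (2 * (a₁ * Mu)) ^ 2 by ring]
        exact Real.sqrt_sq (by positivity)
      calc Real.sqrt (L2nsq pb + L2nsq (deriv pb))
          ≤ Real.sqrt (Mp ^ 2 + 4 * L2nsq f + 4 * a₁ ^ 2 * Mu ^ 2) := by
            apply Real.sqrt_le_sqrt; linarith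
        _ ≤ Real.sqrt (Mp ^ 2) + Real.sqrt (4 * L2nsq f) + Real.sqrt (4 * a₁ ^ 2 * Mu ^ 2) :=
            sqrt_add_le3 (sq_nonneg _) (by linarith) (by positivity)
        _ = Mp + 2 * L2nrm f + 2 * (a₁ * Mu) := by
            rw [Real.sqrt_sq hMp0, hs4, hs5]
    -- conclusion
    have hfinal := add_le_add hsub1 hsub2
    have hm1 : a₁ * Mu ≤ a₁ * (K * S) := mul_le_mul_of_nonneg_left hMuS ha₁.le
    calc Real.sqrt (L2nsq ub + L2nsq (deriv ub)) + Real.sqrt (L2nsq pb + L2nsq (deriv pb))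
        ≤ (Mu + L2nrm g) + (Mp + 2 * L2nrm f + 2 * (a₁ * Mu)) := hfinal
      _ ≤ (K * S + S) + (S + S + a₁ * (K * S) + 2 * S + 2 * (a₁ * (K * S))) := by
          rw [hMp]; linarith
      _ = (K + 5 + 3 * a₁ * K) * S := by ring
      _ = (K + 5 + 3 * a₁ * K) * (L2nrm f + L2nrm g + |h₀| + |h₁|) := by rw [hS]
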